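/- For any vector μ = (μ_1, …, μ_m) in ℝ^m, the total variation distance between G(μ, I_m) and G(0, I_m) is at most (|μ_1| + … + |μ_m|) / √(2π). -/

import Mathlib

open MeasureTheory Matrix Filter

/-- Density of the multivariate Gaussian with mean `μ` and covariance `Σ`. -/
noncomputable def gaussianDensity {m : ℕ} (μ : EuclideanSpace ℝ (Fin m))
    (S : Matrix (Fin m) (Fin m) ℝ) (x : EuclideanSpace ℝ (Fin m)) : ℝ :=
  (Real.sqrt ((2 * Real.pi) ^ m * S.det))⁻¹ *
    Real.exp (-(1 / 2) * ((fun i => x i - μ i) ⬝ᵥ (S⁻¹ *ᵥ fun i => x i - μ i)))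

/-- The multivariate Gaussian measure `G(μ, Σ)` on `ℝ^m`. -/
noncomputable def gaussian {m : ℕ} (μ : EuclideanSpace ℝ (Fin m))
    (S : Matrix (Fin m) (Fin m) ℝ) : Measure (EuclideanSpace ℝ (Fin m)) :=
  volume.withDensity fun x => ENNReal.ofReal (gaussianDensity μ S x)

/-- Total variation distance: `sup_A |P(A) - Q(A)|`. -/
noncomputable def tvDist {Ω : Type*} [MeasurableSpace Ω] (P Q : Measure Ω) : ℝ :=
  ⨆ A ∈ {s : Set Ω | MeasurableSet s}, |(P A).toReal - (Q A).toReal|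

open MeasureTheory Real Set

noncomputable def phi1 (a x : ℝ) : ℝ := (Real.sqrt (2*Real.pi))⁻¹ * Real.exp (-(1/2) * (x-a)^2)

lemma phi1_nonneg (a x : ℝ) : 0 ≤ phi1 a x := by
  unfold phi1; positivity

lemma phi1_le (a x : ℝ) : phi1 a x ≤ (Real.sqrt (2*Real.pi))⁻¹ := by
  unfold phi1
  exact mul_le_of_le_one_right (by positivity)
    (Real.exp_le_one_iff.2 (by nlinarith [sq_nonneg (x-a)]))

lemma integrable_phi1 (a : ℝ) : Integrable (phi1 a) := by
  unfold phi1
  exact (((integrable_exp_neg_mul_sq (by norm_num : (0:ℝ) < 1/2)).comp_sub_right a).const_mul _)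

lemma integral_phi1 (a : ℝ) : ∫ x, phi1 a x = 1 := by
  unfold phi1
  rw [MeasureTheory.integral_const_mul]
  have : (∫ x : ℝ, Real.exp (-(1/2) * (x - a)^2)) = ∫ x : ℝ, Real.exp (-(1/2) * x^2) :=
    integral_sub_right_eq_self (fun x => Real.exp (-(1/2) * x^2)) a
  rw [this, integral_gaussian]
  rw [show Real.pi / (1/2) = 2 * Real.pi by ring]
  rw [inv_mul_cancel₀ (by positivity)]

lemma phi1_zero_sub (a x : ℝ) : phi1 0 (x - a) = phi1 a x := by
  unfold phi1; norm_num

lemma setIntegral_phi1_Ioi (a c : ℝ) :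
    ∫ x in Ioi c, phi1 a x = ∫ x in Ioi (c - a), phi1 0 x := by
  have h := (measurePreserving_sub_right (volume : Measure ℝ) a).setIntegral_preimage_emb
    (MeasurableEquiv.subRight a).measurableEmbedding (phi1 0) (Ioi (c - a))
  have hp : (fun x => x - a) ⁻¹' Ioi (c - a) = Ioi c := by
    ext x; simp [sub_lt_sub_iff_right]
  change ∫ x in (fun x => x - a) ⁻¹' Ioi (c - a), phi1 0 (x - a) = ∫ x in Ioi (c - a), phi1 0 x at h
  rw [← h, hp]
  exact setIntegral_congr_fun measurableSet_Ioi fun x _ => (phi1_zero_sub a x).symm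

lemma setIntegral_phi1_Iic (a c : ℝ) :
    ∫ x in Iic c, phi1 a x = ∫ x in Iic (c - a), phi1 0 x := by
  have h := (measurePreserving_sub_right (volume : Measure ℝ) a).setIntegral_preimage_emb
    (MeasurableEquiv.subRight a).measurableEmbedding (phi1 0) (Iic (c - a))
  have hp : (fun x => x - a) ⁻¹' Iic (c - a) = Iic c := by
    ext x; simp [sub_le_sub_iff_right]
  change ∫ x in (fun x => x - a) ⁻¹' Iic (c - a), phi1 0 (x - a) = ∫ x in Iic (c - a), phi1 0 x at h
  rw [← h, hp]
  exact setIntegral_congr_fun measurableSet_Iic fun x _ => (phi1_zero_sub a x).symm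

lemma l1_phi1_nonneg {a : ℝ} (ha : 0 ≤ a) :
    ∫ x, |phi1 a x - phi1 0 x| ≤ 2 * a / Real.sqrt (2*Real.pi) := by
  have hint : Integrable (fun x => |phi1 a x - phi1 0 x|) :=
    ((integrable_phi1 a).sub (integrable_phi1 0)).abs
  have hmono : ∀ {b c x : ℝ}, (x - b)^2 ≤ (x - c)^2 → phi1 c x ≤ phi1 b x := by
    intro b c x h
    exact mul_le_mul_of_nonneg_left (Real.exp_le_exp.2 (by nlinarith)) (by positivity)
  -- split
  rw [← intervalIntegral.integral_Iic_add_Ioi (b := a/2) hint.integrableOn hint.integrableOn]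
  have hIoi : ∫ x in Ioi (a/2), |phi1 a x - phi1 0 x|
      = ∫ x in Ioc (-(a/2)) (a/2), phi1 0 x := by
    rw [setIntegral_congr_fun measurableSet_Ioi
      (fun x (hx : a/2 < x) => abs_of_nonneg (sub_nonneg.2 (hmono (by nlinarith))))]
    rw [integral_sub ((integrable_phi1 a).integrableOn) ((integrable_phi1 0).integrableOn),
      setIntegral_phi1_Ioi a (a/2), show a/2 - a = -(a/2) by ring]
    have hsplit : ∫ x in Ioi (-(a/2)), phi1 0 x
        = (∫ x in Ioc (-(a/2)) (a/2), phi1 0 x) + ∫ x in Ioi (a/2), phi1 0 x := by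
      rw [← setIntegral_union (Ioc_disjoint_Ioi le_rfl) measurableSet_Ioi
        ((integrable_phi1 0).integrableOn) ((integrable_phi1 0).integrableOn),
        Ioc_union_Ioi_eq_Ioi (by linarith)]
    rw [hsplit]; ring
  have hIic : ∫ x in Iic (a/2), |phi1 a x - phi1 0 x|
      = ∫ x in Ioc (-(a/2)) (a/2), phi1 0 x := by
    rw [setIntegral_congr_fun (g := fun x => phi1 0 x - phi1 a x) measurableSet_Iic
      (fun x (hx : x ≤ a/2) =>
        (abs_sub_comm _ _).trans (abs_of_nonneg (sub_nonneg.2 (hmono (by nlinarith)))))]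
    rw [integral_sub ((integrable_phi1 0).integrableOn) ((integrable_phi1 a).integrableOn),
      setIntegral_phi1_Iic a (a/2), show a/2 - a = -(a/2) by ring]
    have hsplit : ∫ x in Iic (a/2), phi1 0 x
        = (∫ x in Iic (-(a/2)), phi1 0 x) + ∫ x in Ioc (-(a/2)) (a/2), phi1 0 x := by
      rw [← setIntegral_union (Iic_disjoint_Ioc le_rfl) measurableSet_Ioc
        ((integrable_phi1 0).integrableOn) ((integrable_phi1 0).integrableOn),
        Iic_union_Ioc_eq_Iic (by linarith)]
    rw [hsplit]
    ring
  rw [hIoi, hIic]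
  have hbound : ∫ x in Ioc (-(a/2)) (a/2), phi1 0 x ≤ (Real.sqrt (2*Real.pi))⁻¹ * a := by
    calc ∫ x in Ioc (-(a/2)) (a/2), phi1 0 x
        ≤ ∫ _ in Ioc (-(a/2)) (a/2), (Real.sqrt (2*Real.pi))⁻¹ :=
          setIntegral_mono_on ((integrable_phi1 0).integrableOn)
            (integrableOn_const measure_Ioc_lt_top.ne) measurableSet_Ioc
            (fun x _ => phi1_le 0 x)
      _ = (volume (Ioc (-(a/2)) (a/2))).toReal * (Real.sqrt (2*Real.pi))⁻¹ := by
          rw [setIntegral_const]; rfl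
      _ = (Real.sqrt (2*Real.pi))⁻¹ * a := by
          rw [Real.volume_Ioc, ENNReal.toReal_ofReal (by linarith)]
          ring
  rw [show 2 * a / Real.sqrt (2*Real.pi) = 2 * ((Real.sqrt (2*Real.pi))⁻¹ * a) by ring]
  linarith

lemma l1_phi1 (a : ℝ) : ∫ x, |phi1 a x - phi1 0 x| ≤ 2 * |a| / Real.sqrt (2*Real.pi) := by
  rcases le_or_gt 0 a with ha | ha
  · rw [abs_of_nonneg ha]; exact l1_phi1_nonneg ha
  · rw [abs_of_neg ha]
    have hneg : ∀ x : ℝ, phi1 a (-x) = phi1 (-a) x := by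
      intro x; unfold phi1; ring_nf
    calc ∫ x, |phi1 a x - phi1 0 x| = ∫ x, |phi1 a (-x) - phi1 0 (-x)| :=
          (integral_neg_eq_self _ _).symm
      _ = ∫ x, |phi1 (-a) x - phi1 0 x| := by
          congr 1; funext x
          rw [hneg x, show phi1 0 (-x) = phi1 0 x by unfold phi1; ring_nf]
      _ ≤ 2 * -a / Real.sqrt (2*Real.pi) := l1_phi1_nonneg (by linarith)

open Matrix Filter

lemma gaussianDensity_one_eq {m : ℕ} (μ : EuclideanSpace ℝ (Fin m))
    (x : EuclideanSpace ℝ (Fin m)) :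
    gaussianDensity μ 1 x = ∏ i, phi1 (μ i) (x i) := by
  have h2π : (0:ℝ) ≤ 2 * Real.pi := by positivity
  unfold gaussianDensity phi1
  rw [Matrix.det_one, inv_one, Matrix.one_mulVec, mul_one]
  rw [show ((fun i => x i - μ i) ⬝ᵥ fun i => x i - μ i) = ∑ i, (x i - μ i)^2 by
    simp [dotProduct, sq]]
  rw [show Real.sqrt ((2 * Real.pi) ^ m) = (Real.sqrt (2 * Real.pi))^m by
    rw [show (2 * Real.pi) ^ m = ((Real.sqrt (2 * Real.pi))^m)^2 by
      rw [← pow_mul, mul_comm m 2, pow_mul, Real.sq_sqrt h2π]]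
    exact Real.sqrt_sq (pow_nonneg (Real.sqrt_nonneg _) m)]
  rw [Finset.mul_sum, Real.exp_sum,
    show ((Real.sqrt (2 * Real.pi))^m)⁻¹ = ((Real.sqrt (2 * Real.pi))⁻¹)^m by rw [inv_pow],
    show ((Real.sqrt (2 * Real.pi))⁻¹)^m = ∏ _i : Fin m, (Real.sqrt (2 * Real.pi))⁻¹ by
      simp [Finset.prod_const],
    ← Finset.prod_mul_distrib]

lemma integral_euclid {m : ℕ} (g : (Fin m → ℝ) → ℝ) :
    ∫ x : EuclideanSpace ℝ (Fin m), g (fun i => x i) = ∫ y : Fin m → ℝ, g y :=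
  (EuclideanSpace.volume_preserving_symm_measurableEquiv_toLp (Fin m)).integral_comp' g

lemma integrable_euclid_iff {m : ℕ} (g : (Fin m → ℝ) → ℝ) :
    Integrable (fun x : EuclideanSpace ℝ (Fin m) => g (fun i => x i)) ↔ Integrable g :=
  (EuclideanSpace.volume_preserving_symm_measurableEquiv_toLp (Fin m)).integrable_comp_emb
    (MeasurableEquiv.measurableEmbedding _)

lemma integral_prod_phi1 {m : ℕ} (ν : Fin m → ℝ) :
    ∫ y : Fin m → ℝ, ∏ i, phi1 (ν i) (y i) = 1 := by
  rw [MeasureTheory.integral_fintype_prod_volume_eq_prod (f := fun i => phi1 (ν i))]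
  simp [integral_phi1]

lemma integrable_prod_phi1 {m : ℕ} (ν : Fin m → ℝ) :
    Integrable (fun y : Fin m → ℝ => ∏ i, phi1 (ν i) (y i)) :=
  Integrable.fintype_prod (fun i => integrable_phi1 (ν i))

lemma step_bound {m : ℕ} (ν : Fin m → ℝ) (i : Fin m) (b : ℝ) (hνi : ν i = 0) :
    ∫ y : Fin m → ℝ, |(∏ j, phi1 (Function.update ν i b j) (y j)) - ∏ j, phi1 (ν j) (y j)|
      ≤ 2 * |b| / Real.sqrt (2 * Real.pi) := by
  classical
  set g : Fin m → ℝ → ℝ :=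
    Function.update (fun j => phi1 (ν j)) i (fun t => |phi1 b t - phi1 0 t|) with hg
  have hgi : g i = fun t => |phi1 b t - phi1 0 t| := Function.update_self _ _ _
  have hgne : ∀ j, j ≠ i → g j = phi1 (ν j) := fun j hj => Function.update_of_ne hj _ _
  have hpt : ∀ y : Fin m → ℝ,
      |(∏ j, phi1 (Function.update ν i b j) (y j)) - ∏ j, phi1 (ν j) (y j)|
        = ∏ j, g j (y j) := by
    intro y
    rw [← Finset.mul_prod_erase Finset.univ (fun j => phi1 (Function.update ν i b j) (y j))
        (Finset.mem_univ i),
      ← Finset.mul_prod_erase Finset.univ (fun j => phi1 (ν j) (y j)) (Finset.mem_univ i),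
      ← Finset.mul_prod_erase Finset.univ (fun j => g j (y j)) (Finset.mem_univ i)]
    have he : ∏ j ∈ Finset.univ.erase i, phi1 (Function.update ν i b j) (y j)
        = ∏ j ∈ Finset.univ.erase i, phi1 (ν j) (y j) :=
      Finset.prod_congr rfl fun j hj => by
        rw [Function.update_of_ne (Finset.ne_of_mem_erase hj)]
    have he2 : ∏ j ∈ Finset.univ.erase i, g j (y j)
        = ∏ j ∈ Finset.univ.erase i, phi1 (ν j) (y j) :=
      Finset.prod_congr rfl fun j hj => by rw [hgne j (Finset.ne_of_mem_erase hj)]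
    rw [he, he2, Function.update_self, hgi, hνi, ← sub_mul, abs_mul,
      abs_of_nonneg (Finset.prod_nonneg fun j _ => phi1_nonneg _ _)]
  calc ∫ y : Fin m → ℝ,
        |(∏ j, phi1 (Function.update ν i b j) (y j)) - ∏ j, phi1 (ν j) (y j)|
      = ∫ y : Fin m → ℝ, ∏ j, g j (y j) := by simp_rw [hpt]
    _ = ∏ j, ∫ t, g j t := MeasureTheory.integral_fintype_prod_volume_eq_prod g
    _ = (∫ t, |phi1 b t - phi1 0 t|) * ∏ j ∈ Finset.univ.erase i, ∫ t, g j t := by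
        rw [← Finset.mul_prod_erase Finset.univ _ (Finset.mem_univ i), hgi]
    _ = (∫ t, |phi1 b t - phi1 0 t|) * 1 := by
        congr 1
        rw [Finset.prod_congr rfl fun j hj => by
          rw [hgne j (Finset.ne_of_mem_erase hj), integral_phi1]]
        exact Finset.prod_const_one
    _ ≤ 2 * |b| / Real.sqrt (2 * Real.pi) := by rw [mul_one]; exact l1_phi1 b

lemma integrable_g {m : ℕ} (ν ν' : Fin m → ℝ) :
    Integrable (fun y : Fin m → ℝ =>
      |(∏ j, phi1 (ν' j) (y j)) - ∏ j, phi1 (ν j) (y j)|) :=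
  ((integrable_prod_phi1 ν').sub (integrable_prod_phi1 ν)).abs

lemma telescope {m : ℕ} (μ : Fin m → ℝ) (s : Finset (Fin m)) :
    ∫ y : Fin m → ℝ, |(∏ i, phi1 (if i ∈ s then μ i else 0) (y i)) - ∏ i, phi1 0 (y i)|
      ≤ ∑ i ∈ s, 2 * |μ i| / Real.sqrt (2 * Real.pi) := by
  classical
  induction s using Finset.induction_on with
  | empty => simp
  | @insert i s his ih =>
    set ν : Fin m → ℝ := fun j => if j ∈ s then μ j else 0 with hν
    have hν' : (fun j => if j ∈ insert i s then μ j else 0) = Function.update ν i (μ i) := by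
      funext j
      rcases eq_or_ne j i with rfl | hj
      · simp [Function.update_self]
      · simp [Function.update_of_ne hj, hν, Finset.mem_insert, hj]
    simp_rw [show ∀ j, (if j ∈ insert i s then μ j else 0) = Function.update ν i (μ i) j
      from fun j => congrFun hν' j]
    have hνi : ν i = 0 := by simp [hν, his]
    have htri : ∀ y : Fin m → ℝ,
        |(∏ j, phi1 (Function.update ν i (μ i) j) (y j)) - ∏ j, phi1 0 (y j)|
          ≤ |(∏ j, phi1 (Function.update ν i (μ i) j) (y j)) - ∏ j, phi1 (ν j) (y j)|
            + |(∏ j, phi1 (ν j) (y j)) - ∏ j, phi1 0 (y j)| :=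
      fun y => abs_sub_le _ _ _
    calc ∫ y : Fin m → ℝ, |(∏ j, phi1 (Function.update ν i (μ i) j) (y j)) - ∏ j, phi1 0 (y j)|
        ≤ ∫ y : Fin m → ℝ,
            (|(∏ j, phi1 (Function.update ν i (μ i) j) (y j)) - ∏ j, phi1 (ν j) (y j)|
              + |(∏ j, phi1 (ν j) (y j)) - ∏ j, phi1 0 (y j)|) :=
          integral_mono (integrable_g _ _) ((integrable_g _ _).add (integrable_g _ _)) htri
      _ = (∫ y : Fin m → ℝ,
            |(∏ j, phi1 (Function.update ν i (μ i) j) (y j)) - ∏ j, phi1 (ν j) (y j)|)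
          + ∫ y : Fin m → ℝ, |(∏ j, phi1 (ν j) (y j)) - ∏ j, phi1 0 (y j)| :=
          integral_add (integrable_g _ _) (integrable_g _ _)
      _ ≤ 2 * |μ i| / Real.sqrt (2 * Real.pi) + ∑ j ∈ s, 2 * |μ j| / Real.sqrt (2 * Real.pi) :=
          add_le_add (step_bound ν i (μ i) hνi) ih
      _ = ∑ j ∈ insert i s, 2 * |μ j| / Real.sqrt (2 * Real.pi) :=
          (Finset.sum_insert (f := fun j => 2 * |μ j| / Real.sqrt (2 * Real.pi)) his).symm

lemma measurable_phi1 (a : ℝ) : Measurable (phi1 a) := by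
  unfold phi1; fun_prop

lemma measurable_gd {m : ℕ} (ν : EuclideanSpace ℝ (Fin m)) :
    Measurable (gaussianDensity ν 1) := by
  rw [show gaussianDensity ν 1 = fun x => ∏ i, phi1 (ν i) (x i) from
    funext (gaussianDensity_one_eq ν)]
  exact Finset.measurable_prod _ fun i _ =>
    (measurable_phi1 (ν i)).comp ((measurable_pi_apply i).comp
      (MeasurableEquiv.toLp 2 (Fin m → ℝ)).symm.measurable)

lemma gd_nonneg {m : ℕ} (ν : EuclideanSpace ℝ (Fin m)) (x : EuclideanSpace ℝ (Fin m)) :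
    0 ≤ gaussianDensity ν 1 x := by
  rw [gaussianDensity_one_eq]
  exact Finset.prod_nonneg fun i _ => phi1_nonneg _ _

lemma gaussian_apply_toReal {m : ℕ} (ν : EuclideanSpace ℝ (Fin m))
    {A : Set (EuclideanSpace ℝ (Fin m))} (hA : MeasurableSet A) :
    ((gaussian ν 1) A).toReal = ∫ x in A, gaussianDensity ν 1 x := by
  rw [gaussian, withDensity_apply _ hA]
  exact (integral_eq_lintegral_of_nonneg_ae (Eventually.of_forall fun x => gd_nonneg ν x)
    (measurable_gd ν).aestronglyMeasurable).symm

theorem stmt_4 {m : ℕ} (μ : EuclideanSpace ℝ (Fin m)) :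
    tvDist (gaussian μ 1) (gaussian 0 1) ≤
      (∑ i : Fin m, |μ i|) / Real.sqrt (2 * Real.pi) := by
  classical
  set p := gaussianDensity μ 1 with hp
  set q := gaussianDensity (0 : EuclideanSpace ℝ (Fin m)) 1 with hq
  have hB : 0 ≤ (∑ i : Fin m, |μ i|) / Real.sqrt (2 * Real.pi) := by positivity
  have hp_eq : p = fun x => ∏ i, phi1 (μ i) (x i) := funext (gaussianDensity_one_eq μ)
  have hq_eq : q = fun x => ∏ i, phi1 0 (x i) := by
    refine funext fun x => ?_
    rw [hq, gaussianDensity_one_eq]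
    rfl
  have hp_int : Integrable p := by
    rw [hp_eq]
    exact (integrable_euclid_iff (fun y => ∏ i, phi1 (μ i) (y i))).2 (integrable_prod_phi1 _)
  have hq_int : Integrable q := by
    rw [hq_eq]
    exact (integrable_euclid_iff (fun y => ∏ i, phi1 0 (y i))).2 (integrable_prod_phi1 _)
  have hp_one : ∫ x, p x = 1 := by
    rw [hp_eq]
    exact (integral_euclid (fun y => ∏ i, phi1 (μ i) (y i))).trans (integral_prod_phi1 _)
  have hq_one : ∫ x, q x = 1 := by
    rw [hq_eq]
    exact (integral_euclid (fun y => ∏ i, phi1 0 (y i))).trans (integral_prod_phi1 _)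
  have habs_int : Integrable (fun x => |p x - q x|) := (hp_int.sub hq_int).abs
  set L := ∫ x, |p x - q x| with hL
  have hL1 : L ≤ ∑ i : Fin m, 2 * |μ i| / Real.sqrt (2 * Real.pi) := by
    rw [hL, hp_eq, hq_eq]
    have htel := telescope (fun i => μ i) Finset.univ
    simp only [Finset.mem_univ, if_true] at htel
    calc ∫ x : EuclideanSpace ℝ (Fin m), |(∏ i, phi1 (μ i) (x i)) - ∏ i, phi1 0 (x i)|
        = ∫ y : Fin m → ℝ, |(∏ i, phi1 (μ i) (y i)) - ∏ i, phi1 0 (y i)| :=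
          integral_euclid (fun y => |(∏ i, phi1 (μ i) (y i)) - ∏ i, phi1 0 (y i)|)
      _ ≤ ∑ i : Fin m, 2 * |μ i| / Real.sqrt (2 * Real.pi) := htel
  have key : ∀ A : Set (EuclideanSpace ℝ (Fin m)), MeasurableSet A →
      |((gaussian μ 1) A).toReal - ((gaussian 0 1) A).toReal| ≤ L / 2 := by
    intro A hA
    rw [gaussian_apply_toReal μ hA, gaussian_apply_toReal 0 hA, ← hp, ← hq]
    have hg_int : Integrable (fun x => (|p x - q x| + (p x - q x)) / 2) :=
      (habs_int.add (hp_int.sub hq_int)).div_const 2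
    have hg'_int : Integrable (fun x => (|p x - q x| - (p x - q x)) / 2) :=
      (habs_int.sub (hp_int.sub hq_int)).div_const 2
    have hgI : ∫ x, (|p x - q x| + (p x - q x)) / 2 = L / 2 := by
      have hsub : Integrable (fun x => p x - q x) volume := hp_int.sub hq_int
      rw [integral_div, integral_add habs_int hsub,
        integral_sub hp_int hq_int, hp_one, hq_one, ← hL]
      norm_num
    have hg'I : ∫ x, (|p x - q x| - (p x - q x)) / 2 = L / 2 := by
      have hsub : Integrable (fun x => p x - q x) volume := hp_int.sub hq_int
      rw [integral_div, integral_sub habs_int hsub,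
        integral_sub hp_int hq_int, hp_one, hq_one, ← hL]
      norm_num
    rw [abs_sub_le_iff]
    constructor
    · calc (∫ x in A, p x) - ∫ x in A, q x
          = ∫ x in A, (p x - q x) :=
            (integral_sub hp_int.integrableOn hq_int.integrableOn).symm
        _ ≤ ∫ x in A, (|p x - q x| + (p x - q x)) / 2 :=
            setIntegral_mono_on ((hp_int.sub hq_int).integrableOn) hg_int.integrableOn hA
              (fun x _ => by have := le_abs_self (p x - q x); linarith)
        _ ≤ ∫ x, (|p x - q x| + (p x - q x)) / 2 :=
            setIntegral_le_integral hg_int (Eventually.of_forall fun x => by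
              simp only [Pi.zero_apply]
              have := neg_abs_le (p x - q x); linarith)
        _ = L / 2 := hgI
    · calc (∫ x in A, q x) - ∫ x in A, p x
          = ∫ x in A, (q x - p x) :=
            (integral_sub hq_int.integrableOn hp_int.integrableOn).symm
        _ ≤ ∫ x in A, (|p x - q x| - (p x - q x)) / 2 :=
            setIntegral_mono_on ((hq_int.sub hp_int).integrableOn) hg'_int.integrableOn hA
              (fun x _ => by have := neg_abs_le (p x - q x); linarith)
        _ ≤ ∫ x, (|p x - q x| - (p x - q x)) / 2 :=
            setIntegral_le_integral hg'_int (Eventually.of_forall fun x => by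
              simp only [Pi.zero_apply]
              have := le_abs_self (p x - q x); linarith)
        _ = L / 2 := hg'I
  rw [tvDist]
  refine Real.iSup_le (fun A => Real.iSup_le (fun hA => ?_) hB) hB
  calc |((gaussian μ 1) A).toReal - ((gaussian 0 1) A).toReal| ≤ L / 2 := key A hA
    _ ≤ (∑ i : Fin m, 2 * |μ i| / Real.sqrt (2 * Real.pi)) / 2 := by linarith
    _ = (∑ i : Fin m, |μ i|) / Real.sqrt (2 * Real.pi) := by
        rw [show ∑ i : Fin m, 2 * |μ i| / Real.sqrt (2 * Real.pi)
            = 2 * ((∑ i : Fin m, |μ i|) / Real.sqrt (2 * Real.pi)) by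
          rw [Finset.sum_div, Finset.mul_sum]
          exact Finset.sum_congr rfl fun i _ => by ring]
        ring
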